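/- Let G be a finite nilpotent group and b, c elements of G of coprime orders with bc = cb. Set a = bc. Then for any positive integer n, a is n-Engel in G if and only if both b and c are n-Engel in G. -/

import Mathlib

set_option maxHeartbeats 1000000

open scoped commutatorElement

/-- The left-normed iterated commutator `[x, y, y, ..., y]` with `n` copies of `y`. -/
def engelComm {G : Type*} [Group G] (x y : G) : ℕ → G
  | 0 => x
  | n + 1 => ⁅engelComm x y n, y⁆

lemma engelComm_map {G H F : Type*} [Group G] [Group H] [FunLike F G H] [MonoidHomClass F G H]
    (f : F) (x y : G) (n : ℕ) :
    engelComm (f x) (f y) n = f (engelComm x y n) := by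
  induction n with
  | zero => rfl
  | succ n ih => simp [engelComm, ih, map_commutatorElement]

lemma engelComm_one_right {G : Type*} [Group G] (x : G) {n : ℕ} (hn : 0 < n) :
    engelComm x 1 n = 1 := by
  cases n with
  | zero => omega
  | succ n => simp [engelComm]

lemma engelComm_pi {ι : Type*} {H : ι → Type*} [∀ i, Group (H i)] (x y : ∀ i, H i) (n : ℕ)
    (i : ι) : engelComm x y n i = engelComm (x i) (y i) n :=
  (engelComm_map (Pi.evalMonoidHom H i) x y n).symm

theorem stmt2 {G : Type*} [Group G] [Finite G] (hG : Group.IsNilpotent G)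
    (b c : G) (hbc : Commute b c) (hcop : (orderOf b).Coprime (orderOf c))
    (a : G) (ha : a = b * c) (n : ℕ) (hn : 0 < n) :
    (∀ x : G, engelComm x a n = 1) ↔
      ((∀ x : G, engelComm x b n = 1) ∧ (∀ x : G, engelComm x c n = 1)) := by
  obtain ⟨e⟩ := ((isNilpotent_of_finite_tfae (G := G)).out 0 4).mp hG
  set φ := e.symm with hφ
  -- transport of Engel condition along the isomorphism
  have transport : ∀ y : G, (∀ x : G, engelComm x y n = 1) ↔
      (∀ x : ∀ p : (Nat.card G).primeFactors, ∀ P : Sylow p G, (↑P : Subgroup G),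
        engelComm x (φ y) n = 1) := by
    intro y
    constructor
    · intro h x
      have h2 := engelComm_map φ (e x) y n
      rw [hφ, MulEquiv.symm_apply_apply] at h2
      rw [h2, h (e x), map_one]
    · intro h x
      have h2 := h (φ x)
      rw [engelComm_map φ x y n] at h2
      have h3 := congrArg e h2
      rw [hφ, MulEquiv.apply_symm_apply, map_one] at h3
      exact h3
  -- at most one of the components of b, c is nontrivial
  have key : ∀ (p : (Nat.card G).primeFactors) (P : Sylow p G),
      φ b p P = 1 ∨ φ c p P = 1 := by
    intro p P
    by_contra hcon
    push_neg at hcon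
    obtain ⟨hb1, hc1⟩ := hcon
    haveI : Fact (Nat.Prime (p : ℕ)) := ⟨Nat.prime_of_mem_primeFactors p.2⟩
    have hdvd : ∀ g : G, g ≠ 1 → ∀ hne : φ g p P ≠ 1, (p : ℕ) ∣ orderOf g := by
      intro g _ hne
      have h1 : orderOf (φ g p P) ∣ orderOf (φ g p) :=
        orderOf_map_dvd (Pi.evalMonoidHom _ P) (φ g p)
      have h2 : orderOf (φ g p) ∣ orderOf (φ g) :=
        orderOf_map_dvd (Pi.evalMonoidHom _ p) (φ g)
      have h3 : orderOf (φ g) = orderOf g := orderOf_injective φ.toMonoidHom φ.injective g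
      obtain ⟨k, hk⟩ := P.isPGroup' (φ g p P)
      have h4 : orderOf (φ g p P) ∣ (p : ℕ) ^ k := orderOf_dvd_of_pow_eq_one hk
      obtain ⟨j, _, hj⟩ := (Nat.dvd_prime_pow (Fact.out : Nat.Prime (p : ℕ))).mp h4
      have hj0 : j ≠ 0 := by
        rintro rfl
        simp only [pow_zero, orderOf_eq_one_iff] at hj
        exact hne hj
      have hpord : (p : ℕ) ∣ orderOf (φ g p P) := hj ▸ dvd_pow_self _ hj0
      exact hpord.trans (h1.trans (h2.trans h3.dvd))
    have hb : (p : ℕ) ∣ orderOf b := hdvd b (by rintro rfl; simp at hb1) hb1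
    have hc : (p : ℕ) ∣ orderOf c := hdvd c (by rintro rfl; simp at hc1) hc1
    have h1 : (p : ℕ) ∣ 1 := hcop ▸ Nat.dvd_gcd hb hc
    exact (Nat.prime_of_mem_primeFactors p.2).ne_one (Nat.dvd_one.mp h1)
  have habc : ∀ (p : (Nat.card G).primeFactors) (P : Sylow p G),
      φ a p P = φ b p P * φ c p P := by
    intro p P
    rw [ha, map_mul]
    rfl
  rw [transport a, transport b, transport c]
  constructor
  · intro hA
    constructor
    · intro x
      funext p P
      rw [engelComm_pi, engelComm_pi]
      rcases key p P with hb1 | hc1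
      · rw [hb1, engelComm_one_right _ hn]; rfl
      · have hab : φ a p P = φ b p P := by rw [habc p P, hc1, mul_one]
        rw [← hab]
        have := congrFun (congrFun (hA x) p) P
        rw [engelComm_pi, engelComm_pi] at this
        exact this
    · intro x
      funext p P
      rw [engelComm_pi, engelComm_pi]
      rcases key p P with hb1 | hc1
      · have hac : φ a p P = φ c p P := by rw [habc p P, hb1, one_mul]
        rw [← hac]
        have := congrFun (congrFun (hA x) p) P
        rw [engelComm_pi, engelComm_pi] at this
        exact this
      · rw [hc1, engelComm_one_right _ hn]; rfl
  · rintro ⟨hB, hC⟩ x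
    funext p P
    rw [engelComm_pi, engelComm_pi]
    rcases key p P with hb1 | hc1
    · have hac : φ a p P = φ c p P := by rw [habc p P, hb1, one_mul]
      rw [hac]
      have := congrFun (congrFun (hC x) p) P
      rw [engelComm_pi, engelComm_pi] at this
      exact this
    · have hab : φ a p P = φ b p P := by rw [habc p P, hc1, mul_one]
      rw [hab]
      have := congrFun (congrFun (hB x) p) P
      rw [engelComm_pi, engelComm_pi] at this
      exact this
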